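/- arXiv:2207.06947 — 2 statements merged into one kernel-verified Lean document; each statement's English description precedes it below -/
import Mathlib

section
/- Let f ∈ Γ_n, Q ∈ ℝ^{m×n}, and c > 0. The problem minimize over y ∈ ℝ^m of f*(−Qᵀy) + (c/2)‖y − r/c‖² admits the solution y* = (1/c)(Qx* + r), where x* is any minimizer of x ↦ f(x) + (1/(2c))‖Qx + r‖² (assuming f*∘(−Qᵀ) is proper so the minimizer exists and is unique). -/
open scoped BigOperators
noncomputable section

abbrev Evec (n : ℕ) := EuclideanSpace ℝ (Fin n)

/-- Convexity for extended-real-valued functions. -/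
def IsConvexFn {n : ℕ} (f : Evec n → EReal) : Prop :=
  ∀ x y : Evec n, ∀ a b : ℝ, 0 ≤ a → 0 ≤ b → a + b = 1 →
    f (a • x + b • y) ≤ (a : EReal) * f x + (b : EReal) * f y

/-- Properness: never `⊥` and finite somewhere. -/
def IsProperFn {n : ℕ} (f : Evec n → EReal) : Prop :=
  (∀ x, f x ≠ ⊥) ∧ ∃ x, f x ≠ ⊤

/-- `f ∈ Γ_n`: proper, closed (lsc) and convex. -/
def InGamma {n : ℕ} (f : Evec n → EReal) : Prop :=
  IsProperFn f ∧ LowerSemicontinuous f ∧ IsConvexFn f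

/-- Convex subdifferential. -/
def subdiff {n : ℕ} (f : Evec n → EReal) (x : Evec n) : Set (Evec n) :=
  {u | ∀ y, f x + ((inner ℝ u (y - x) : ℝ) : EReal) ≤ f y}

/-- Convex (Fenchel) conjugate. -/
def conjFn {n : ℕ} (f : Evec n → EReal) (z : Evec n) : EReal :=
  ⨆ x : Evec n, ((inner ℝ z x : ℝ) : EReal) - f x

open Classical in
def indFn {n : ℕ} (S : Set (Evec n)) (x : Evec n) : EReal :=
  if x ∈ S then 0 else ⊤

set_option maxHeartbeats 1000000 in
/-- the strongly convex dual subproblem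
`min_y f*(-Qᵀy) + (c/2)‖y - r/c‖²` is solved by `y* = (1/c)(Qx* + r)` where
`x*` minimizes `x ↦ f(x) + (1/(2c))‖Qx + r‖²`; the minimizer is unique. -/
theorem dual_prox_step_solution {n m : ℕ} (f : Evec n → EReal) (hf : InGamma f)
    (Q : Evec n →L[ℝ] Evec m) (c : ℝ) (hc : 0 < c) (r : Evec m)
    (hproper : ∃ y : Evec m, conjFn f (-(ContinuousLinearMap.adjoint Q y)) ≠ ⊤)
    (xstar : Evec n)
    (hx : ∀ x : Evec n,
      f xstar + ((1 / (2 * c) * ‖Q xstar + r‖ ^ 2 : ℝ) : EReal)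
        ≤ f x + ((1 / (2 * c) * ‖Q x + r‖ ^ 2 : ℝ) : EReal))
    (ystar : Evec m) (hy : ystar = (1 / c) • (Q xstar + r)) :
    (∀ y : Evec m,
      conjFn f (-(ContinuousLinearMap.adjoint Q ystar))
          + ((c / 2 * ‖ystar - (1 / c) • r‖ ^ 2 : ℝ) : EReal)
        ≤ conjFn f (-(ContinuousLinearMap.adjoint Q y))
          + ((c / 2 * ‖y - (1 / c) • r‖ ^ 2 : ℝ) : EReal))
    ∧ ∀ y : Evec m,
        (∀ y' : Evec m,
          conjFn f (-(ContinuousLinearMap.adjoint Q y))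
              + ((c / 2 * ‖y - (1 / c) • r‖ ^ 2 : ℝ) : EReal)
            ≤ conjFn f (-(ContinuousLinearMap.adjoint Q y'))
              + ((c / 2 * ‖y' - (1 / c) • r‖ ^ 2 : ℝ) : EReal))
        → y = ystar := by
  classical
  obtain ⟨⟨hbot, x0, hx0⟩, _, hconv⟩ := hf
  have hc' : c ≠ 0 := ne_of_gt hc
  -- f xstar is finite
  have hfin_top : f xstar ≠ ⊤ := by
    intro h
    have h1 := hx x0
    rw [h] at h1
    have h2 : f x0 + ((1 / (2 * c) * ‖Q x0 + r‖ ^ 2 : ℝ) : EReal) < ⊤ :=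
      EReal.add_lt_top hx0 (EReal.coe_ne_top _)
    have h3 : (⊤ : EReal) + ((1 / (2 * c) * ‖Q xstar + r‖ ^ 2 : ℝ) : EReal) = ⊤ := by
      rw [EReal.top_add_of_ne_bot (EReal.coe_ne_bot _)]
    rw [h3] at h1
    exact absurd h1 (not_le.mpr h2)
  set a : ℝ := (f xstar).toReal with ha_def
  have ha : f xstar = (a : EReal) := (EReal.coe_toReal hfin_top (hbot _)).symm
  set zstar : Evec n := -(ContinuousLinearMap.adjoint Q ystar) with hz_def
  -- inner zstar v = -(1/c) * inner (Q xstar + r) (Q v)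
  have hadj : ∀ v : Evec n, (inner ℝ zstar v : ℝ)
      = -(1/c) * (inner ℝ (Q xstar + r) (Q v) : ℝ) := by
    intro v
    rw [hz_def, inner_neg_left, hy, ContinuousLinearMap.adjoint_inner_left,
      real_inner_smul_left]
    ring
  -- subgradient inequality
  have hsub : ∀ x : Evec n, ((a + inner ℝ zstar (x - xstar) : ℝ) : EReal) ≤ f x := by
    intro x
    by_cases hxt : f x = ⊤
    · rw [hxt]; exact le_top
    have hb : f x = ((f x).toReal : ℝ) := (EReal.coe_toReal hxt (hbot _)).symm
    set b : ℝ := (f x).toReal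
    rw [hb, EReal.coe_le_coe_iff]
    set K : ℝ := (inner ℝ (Q xstar + r) (Q (x - xstar)) : ℝ) with hK
    set N : ℝ := ‖Q (x - xstar)‖ ^ 2 with hN
    set u : ℝ := 1 / (2 * c) with hu
    have hupos : 0 < u := by rw [hu]; positivity
    have hNnn : 0 ≤ N := by rw [hN]; positivity
    have h1c : (1 : ℝ) / c = 2 * u := by rw [hu]; field_simp
    have key : ∀ t : ℝ, t ∈ Set.Ioc (0:ℝ) 1 →
        a ≤ b + 2 * u * K + t * (u * N) := by
      intro t ht
      have hcomb := hconv xstar x (1 - t) t (by linarith [ht.2]) (le_of_lt ht.1) (by ring)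
      set xt : Evec n := (1 - t) • xstar + t • x with hxt_def
      have h1 : f xt ≤ (((1 - t) * a + t * b : ℝ) : EReal) := by
        rw [ha, hb] at hcomb
        calc f xt ≤ ((1 - t : ℝ) : EReal) * (a : EReal) + ((t : ℝ) : EReal) * (b : EReal) := hcomb
          _ = (((1 - t) * a + t * b : ℝ) : EReal) := by
              rw [← EReal.coe_mul, ← EReal.coe_mul, ← EReal.coe_add]
      have h2 : ((a + u * ‖Q xstar + r‖ ^ 2 : ℝ) : EReal)
          ≤ (((1 - t) * a + t * b + u * ‖Q xt + r‖ ^ 2 : ℝ) : EReal) := by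
        calc ((a + u * ‖Q xstar + r‖ ^ 2 : ℝ) : EReal)
            = f xstar + ((u * ‖Q xstar + r‖ ^ 2 : ℝ) : EReal) := by
              rw [ha, ← EReal.coe_add]
          _ ≤ f xt + ((u * ‖Q xt + r‖ ^ 2 : ℝ) : EReal) := by rw [hu]; exact hx xt
          _ ≤ (((1 - t) * a + t * b : ℝ) : EReal)
                + ((u * ‖Q xt + r‖ ^ 2 : ℝ) : EReal) := add_le_add_left h1 _
          _ = (((1 - t) * a + t * b + u * ‖Q xt + r‖ ^ 2 : ℝ) : EReal) := by
              rw [← EReal.coe_add]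
      rw [EReal.coe_le_coe_iff] at h2
      have hxt_eq : Q xt + r = (Q xstar + r) + t • (Q (x - xstar)) := by
        rw [hxt_def]
        simp only [map_add, map_smul, map_sub, smul_sub, sub_smul, one_smul]
        abel
      have hnorm : ‖Q xt + r‖ ^ 2
          = ‖Q xstar + r‖ ^ 2 + 2 * t * K + t ^ 2 * N := by
        rw [hxt_eq, @norm_add_sq_real, real_inner_smul_right, norm_smul, hK, hN]
        simp only [mul_pow, sq_abs, Real.norm_eq_abs]
        ring
      rw [hnorm] at h2
      have h3 : 0 ≤ t * (b + 2 * u * K + t * (u * N) - a) := by nlinarith [h2]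
      nlinarith [h3, ht.1]
    -- limit t → 0
    have hlim : a ≤ b + 2 * u * K := by
      by_contra hlt
      push_neg at hlt
      set ε : ℝ := a - (b + 2 * u * K) with hε
      have hεpos : 0 < ε := by rw [hε]; linarith
      set C : ℝ := u * N with hC
      have hCnn : 0 ≤ C := mul_nonneg (le_of_lt hupos) hNnn
      set t : ℝ := min 1 (ε / (2 * (C + 1))) with ht_def
      have htpos : 0 < t := lt_min one_pos (div_pos hεpos (by linarith))
      have htle : t ≤ 1 := min_le_left _ _
      have h4 := key t ⟨htpos, htle⟩
      have h5 : t * C < ε := by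
        have h6 : t ≤ ε / (2 * (C + 1)) := min_le_right _ _
        have h7 : t * C ≤ (ε / (2 * (C + 1))) * C :=
          mul_le_mul_of_nonneg_right h6 hCnn
        have h8 : (ε / (2 * (C + 1))) * C < ε := by
          rw [div_mul_eq_mul_div, div_lt_iff₀ (by linarith)]
          nlinarith
        linarith
      linarith
    have hinner : (inner ℝ zstar (x - xstar) : ℝ) = -(1/c) * K := hadj (x - xstar)
    rw [hinner, h1c]
    linarith
  -- conjugate value at zstar
  have hconj_star : conjFn f zstar = ((inner ℝ zstar xstar - a : ℝ) : EReal) := by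
    apply le_antisymm
    · apply iSup_le
      intro x
      by_cases hxt : f x = ⊤
      · rw [hxt, EReal.sub_top]; exact bot_le
      have hb : f x = ((f x).toReal : ℝ) := (EReal.coe_toReal hxt (hbot _)).symm
      rw [hb, ← EReal.coe_sub, EReal.coe_le_coe_iff]
      have h1 := hsub x
      rw [hb, EReal.coe_le_coe_iff] at h1
      have h2 : (inner ℝ zstar (x - xstar) : ℝ)
          = (inner ℝ zstar x : ℝ) - (inner ℝ zstar xstar : ℝ) := inner_sub_right _ _ _
      linarith
    · have h1 : ((inner ℝ zstar xstar - a : ℝ) : EReal)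
          = ((inner ℝ zstar xstar : ℝ) : EReal) - f xstar := by
        rw [ha, ← EReal.coe_sub]
      rw [h1]
      exact le_iSup (fun x => ((inner ℝ zstar x : ℝ) : EReal) - f x) xstar
  -- Fenchel lower bound for arbitrary y
  have hlow : ∀ y : Evec m,
      ((inner ℝ (-(ContinuousLinearMap.adjoint Q y)) xstar - a : ℝ) : EReal)
        ≤ conjFn f (-(ContinuousLinearMap.adjoint Q y)) := by
    intro y
    have h1 : ((inner ℝ (-(ContinuousLinearMap.adjoint Q y)) xstar - a : ℝ) : EReal)
        = ((inner ℝ (-(ContinuousLinearMap.adjoint Q y)) xstar : ℝ) : EReal) - f xstar := by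
      rw [ha, ← EReal.coe_sub]
    rw [h1]
    exact le_iSup (fun x => ((inner ℝ (-(ContinuousLinearMap.adjoint Q y)) x : ℝ) : EReal) - f x) xstar
  -- quadratic identity
  have hQx : Q xstar = c • ystar - r := by
    rw [hy, smul_smul, mul_one_div, div_self hc', one_smul]
    abel
  have hinner_y : ∀ y : Evec m, (inner ℝ (-(ContinuousLinearMap.adjoint Q y)) xstar : ℝ)
      = -(c * (inner ℝ y ystar : ℝ) - (inner ℝ y r : ℝ)) := by
    intro y
    rw [inner_neg_left, ContinuousLinearMap.adjoint_inner_left, hQx, inner_sub_right,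
      real_inner_smul_right]
  have hquad : ∀ y : Evec m,
      ((inner ℝ zstar xstar : ℝ) - a) + c / 2 * ‖ystar - (1/c) • r‖ ^ 2
          + c / 2 * ‖y - ystar‖ ^ 2
        = ((inner ℝ (-(ContinuousLinearMap.adjoint Q y)) xstar : ℝ) - a)
          + c / 2 * ‖y - (1/c) • r‖ ^ 2 := by
    intro y
    rw [hz_def, hinner_y, hinner_y]
    have e1 : ‖ystar - (1/c) • r‖ ^ 2
        = ‖ystar‖ ^ 2 - 2 * ((1/c) * (inner ℝ ystar r : ℝ)) + ‖(1/c) • r‖ ^ 2 := by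
      rw [@norm_sub_sq_real, real_inner_smul_right]
    have e2 : ‖y - (1/c) • r‖ ^ 2
        = ‖y‖ ^ 2 - 2 * ((1/c) * (inner ℝ y r : ℝ)) + ‖(1/c) • r‖ ^ 2 := by
      rw [@norm_sub_sq_real, real_inner_smul_right]
    have e3 : ‖y - ystar‖ ^ 2
        = ‖y‖ ^ 2 - 2 * (inner ℝ y ystar : ℝ) + ‖ystar‖ ^ 2 := by
      rw [@norm_sub_sq_real]
    rw [e1, e2, e3, real_inner_self_eq_norm_sq]
    field_simp
    ring
  -- value at ystar
  set G : ℝ := ((inner ℝ zstar xstar : ℝ) - a) + c / 2 * ‖ystar - (1/c) • r‖ ^ 2 with hG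
  have hgstar : conjFn f (-(ContinuousLinearMap.adjoint Q ystar))
      + ((c / 2 * ‖ystar - (1 / c) • r‖ ^ 2 : ℝ) : EReal) = (G : EReal) := by
    rw [← hz_def, hconj_star, ← EReal.coe_add, hG]
  have hmain : ∀ y : Evec m,
      ((G + c / 2 * ‖y - ystar‖ ^ 2 : ℝ) : EReal)
        ≤ conjFn f (-(ContinuousLinearMap.adjoint Q y))
          + ((c / 2 * ‖y - (1 / c) • r‖ ^ 2 : ℝ) : EReal) := by
    intro y
    have h1 : (G + c / 2 * ‖y - ystar‖ ^ 2 : ℝ)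
        = ((inner ℝ (-(ContinuousLinearMap.adjoint Q y)) xstar : ℝ) - a)
          + c / 2 * ‖y - (1/c) • r‖ ^ 2 := by
      rw [hG]; linarith [hquad y]
    rw [h1, EReal.coe_add]
    have := hlow y
    have h2 : ((c / 2 * ‖y - (1/c) • r‖ ^ 2 : ℝ) : EReal)
        = ((c / 2 * ‖y - (1 / c) • r‖ ^ 2 : ℝ) : EReal) := by norm_num
    rw [h2]
    exact add_le_add_left (hlow y) _
  constructor
  · intro y
    rw [hgstar]
    calc (G : EReal) ≤ ((G + c / 2 * ‖y - ystar‖ ^ 2 : ℝ) : EReal) := by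
          rw [EReal.coe_le_coe_iff]
          have : 0 ≤ c / 2 * ‖y - ystar‖ ^ 2 :=
            mul_nonneg (by linarith) (sq_nonneg _)
          linarith
      _ ≤ _ := hmain y
  · intro y hymin
    have h1 := hymin ystar
    rw [hgstar] at h1
    have h2 := hmain y
    have h3 : ((G + c / 2 * ‖y - ystar‖ ^ 2 : ℝ) : EReal) ≤ (G : EReal) := le_trans h2 h1
    rw [EReal.coe_le_coe_iff] at h3
    have h4 : ‖y - ystar‖ ^ 2 ≤ 0 := by nlinarith
    have h5 : ‖y - ystar‖ = 0 := by nlinarith [norm_nonneg (y - ystar), sq_nonneg ‖y - ystar‖]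
    rw [norm_sub_eq_zero_iff] at h5
    exact h5
end
end

section
/- Suppose sequences (y_i^k), (z_i^k) in ℝ^m satisfy y_i^k → y* and z_i^k → y* for each i in a finite set N, and s_i^{k+1} = s_i^k + σ(y_i^k − z_i^k) with σ > 0. If w^k := Σᵢ s_i^k converges to some w*, and for each k, w^{k+1} − (σ/|N|) Σᵢ (z_i^{k+1} − y_i^{k+1}) ∈ (1/|N|) Σᵢ ∂g*(z_i^{k+1}) for a proper closed convex g, then y* ∈ ∂g(w*). -/
open scoped BigOperators
noncomputable section

open Filter Topology

section AuxLemmas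
variable {m : ℕ}

open Filter Topology

variable {m : ℕ}

lemma subdiff_ne_top {f : Evec m → EReal} {x u : Evec m} (hu : u ∈ subdiff f x)
    (hf : ∃ v, f v ≠ ⊤) : f x ≠ ⊤ := by
  rcases hf with ⟨v, hv⟩
  intro h
  refine hv (top_le_iff.1 ?_)
  have := hu v
  rwa [h, EReal.top_add_coe] at this

lemma f_real {f : Evec m → EReal} (ℓ : Evec m → ℝ) (hℓ : ∀ v, (ℓ v : EReal) ≤ f v)
    {x : Evec m} (hx : f x ≠ ⊤) : ∃ r : ℝ, f x = (r : EReal) := by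
  refine ⟨(f x).toReal, ((EReal.coe_toReal hx (fun hb => ?_))).symm⟩
  have := hℓ x
  rw [hb] at this
  exact (EReal.coe_ne_bot _ (le_bot_iff.1 this))

/-- convex combinations of subgradients at a common point are subgradients -/
lemma subdiff_combo {N : ℕ} (hN : 0 < N) {f : Evec m → EReal} {x : Evec m}
    (q : Fin N → Evec m) (hq : ∀ i, q i ∈ subdiff f x) :
    (1 / (N:ℝ)) • ∑ i, q i ∈ subdiff f x := by
  intro v
  have hne : (Finset.univ : Finset (Fin N)).Nonempty := by
    simpa [Finset.univ_nonempty_iff] using Fin.pos_iff_nonempty.1 hN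
  obtain ⟨j, _, hj⟩ := Finset.exists_mem_eq_sup' hne (fun i => (inner ℝ (q i) (v - x) : ℝ))
  have hle : (inner ℝ ((1 / (N:ℝ)) • ∑ i, q i) (v - x) : ℝ) ≤ inner ℝ (q j) (v - x) := by
    rw [real_inner_smul_left, sum_inner]
    have hbound : ∑ i, (inner ℝ (q i) (v - x) : ℝ) ≤ ∑ _i : Fin N, (inner ℝ (q j) (v - x) : ℝ) := by
      apply Finset.sum_le_sum
      intro i _
      rw [← hj]
      exact Finset.le_sup' (f := fun i => (inner ℝ (q i) (v - x) : ℝ)) (Finset.mem_univ i)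
    have hN' : (0:ℝ) < N := by exact_mod_cast hN
    calc (1 / (N:ℝ)) * ∑ i, (inner ℝ (q i) (v - x) : ℝ)
        ≤ (1 / (N:ℝ)) * (N * (inner ℝ (q j) (v - x) : ℝ)) := by
          apply mul_le_mul_of_nonneg_left _ (by positivity)
          simpa using hbound
      _ = inner ℝ (q j) (v - x) := by field_simp
  calc f x + ((inner ℝ ((1 / (N:ℝ)) • ∑ i, q i) (v - x) : ℝ) : EReal)
      ≤ f x + ((inner ℝ (q j) (v - x) : ℝ) : EReal) := by
        exact add_le_add_right (EReal.coe_le_coe_iff.2 hle) _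
    _ ≤ f v := hq j v

lemma subdiff_closed_graph {f : Evec m → EReal} (hlsc : LowerSemicontinuous f)
    (ℓ : Evec m → ℝ) (hℓ : ∀ v, (ℓ v : EReal) ≤ f v)
    (hT : ∃ v, f v ≠ ⊤)
    {z u : ℕ → Evec m} {y ub : Evec m}
    (hz : Tendsto z atTop (𝓝 y)) (hu : ∀ k, u k ∈ subdiff f (z k))
    (hul : Tendsto u atTop (𝓝 ub)) : ub ∈ subdiff f y := by
  intro v
  by_cases hvt : f v = ⊤
  · rw [hvt]; exact le_top
  obtain ⟨fv, hfv⟩ := f_real ℓ hℓ hvt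
  set c : ℝ := (inner ℝ ub (v - y) : ℝ) with hc
  have hck : Tendsto (fun k => (inner ℝ (u k) (v - z k) : ℝ)) atTop (𝓝 c) :=
    hul.inner (tendsto_const_nhds.sub hz)
  have claim : ∀ b : ℝ, (b : EReal) < f y → b + c ≤ fv := by
    intro b hb
    refine le_of_forall_pos_le_add ?_
    intro ε hε
    have h1 : ∀ᶠ k in atTop, (b : EReal) < f (z k) :=
      hz.eventually (hlsc y (b : EReal) hb)
    have h2 : ∀ᶠ k in atTop, c - ε < (inner ℝ (u k) (v - z k) : ℝ) :=
      hck.eventually (eventually_gt_nhds (by linarith))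
    obtain ⟨k, hk1, hk2⟩ := (h1.and h2).exists
    obtain ⟨rk, hrk⟩ := f_real ℓ hℓ (subdiff_ne_top (hu k) hT)
    have hbk : b < rk := by
      rw [hrk] at hk1; exact_mod_cast hk1
    have := hu k v
    rw [hrk, hfv, ← EReal.coe_add, EReal.coe_le_coe_iff] at this
    linarith
  by_cases hyt : f y = ⊤
  · exfalso
    have := claim (fv - c + 1) (by rw [hyt]; exact EReal.coe_lt_top _)
    linarith
  obtain ⟨ry, hry⟩ := f_real ℓ hℓ hyt
  rw [hry, hfv, ← EReal.coe_add, EReal.coe_le_coe_iff]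
  by_contra h
  push_neg at h
  have hb : ((( fv - c + ry)/2 : ℝ) : EReal) < f y := by
    rw [hry, EReal.coe_lt_coe_iff]; linarith
  have := claim _ hb
  linarith

lemma subdiff_isClosed {f : Evec m → EReal} (hlsc : LowerSemicontinuous f)
    (ℓ : Evec m → ℝ) (hℓ : ∀ v, (ℓ v : EReal) ≤ f v) (hT : ∃ v, f v ≠ ⊤)
    (y : Evec m) : IsClosed (subdiff f y) := by
  refine IsSeqClosed.isClosed ?_
  intro u ub hu hul
  exact subdiff_closed_graph hlsc ℓ hℓ hT tendsto_const_nhds hu hul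

lemma key_lemma : ∀ (d : ℕ) (V : Submodule ℝ (Evec m)), Module.finrank ℝ V ≤ d →
    ∀ (f : Evec m → EReal), LowerSemicontinuous f →
    ∀ (ℓ : Evec m → ℝ), Continuous ℓ → (∀ v, (ℓ v : EReal) ≤ f v) →
    (∃ v, f v ≠ ⊤) →
    ∀ (N : ℕ), 0 < N → ∀ (z u : ℕ → Fin N → Evec m) (y w : Evec m),
    (∀ v, f v ≠ ⊤ → v - y ∈ V) →
    (∀ i, Tendsto (fun k => z k i) atTop (𝓝 y)) →
    (∀ k i, u k i ∈ subdiff f (z k i)) →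
    Tendsto (fun k => (1 / (N:ℝ)) • ∑ i, u k i) atTop (𝓝 w) →
    w ∈ subdiff f y := by
  intro d
  induction d with
  | zero =>
    intro V hV f hlsc ℓ hℓc hℓ hT N hN z u y w hdom hz hu havg
    have hVbot : V = ⊥ := Submodule.finrank_eq_zero.1 (Nat.le_zero.1 hV)
    have hzy : ∀ k i, z k i = y := by
      intro k i
      have h1 : z k i - y ∈ V := hdom _ (subdiff_ne_top (hu k i) hT)
      rw [hVbot, Submodule.mem_bot] at h1
      exact sub_eq_zero.1 h1
    refine (subdiff_isClosed hlsc ℓ hℓ hT y).mem_of_tendsto havg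
      (Filter.Eventually.of_forall fun k => ?_)
    refine subdiff_combo hN _ fun i => ?_
    have := hu k i
    rwa [hzy k i] at this
  | succ d ih =>
    intro V hV f hlsc ℓ hℓc hℓ hT N hN z u y w hdom hz hu havg
    set Pv : Evec m →L[ℝ] Evec m := V.subtypeL.comp (V.orthogonalProjectionOnto) with hPv
    have hP1 : ∀ x, Pv x ∈ V := fun x => (V.orthogonalProjectionOnto x).2
    have hP2 : ∀ (a x : Evec m), x ∈ V → (inner ℝ (Pv a) x : ℝ) = inner ℝ a x := by
      intro a x hx
      have horth : a - Pv a ∈ Vᗮ := V.sub_starProjection_mem_orthogonal a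
      have h0 : (inner ℝ (a - Pv a) x : ℝ) = 0 := by
        rw [real_inner_comm]
        exact (Submodule.mem_orthogonal V _).1 horth x hx
      rw [inner_sub_left] at h0
      linarith
    set u' : ℕ → Fin N → Evec m := fun k i => Pv (u k i) with hu'def
    have hzdom : ∀ k i, z k i - y ∈ V := fun k i => hdom _ (subdiff_ne_top (hu k i) hT)
    have hu' : ∀ k i, u' k i ∈ subdiff f (z k i) := by
      intro k i v
      by_cases hvt : f v = ⊤
      · rw [hvt]; exact le_top
      have hmem : v - z k i ∈ V := by
        have := V.sub_mem (hdom v hvt) (hzdom k i)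
        simpa using this
      have : (inner ℝ (u' k i) (v - z k i) : ℝ) = inner ℝ (u k i) (v - z k i) :=
        hP2 _ _ hmem
      rw [this]
      exact hu k i v
    have havg' : Tendsto (fun k => (1 / (N:ℝ)) • ∑ i, u' k i) atTop (𝓝 (Pv w)) := by
      have heq : (fun k => (1 / (N:ℝ)) • ∑ i, u' k i)
          = fun k => Pv ((1 / (N:ℝ)) • ∑ i, u k i) := by
        funext k
        rw [map_smul, map_sum]
      rw [heq]
      exact (Pv.continuous.tendsto w).comp havg
    suffices hPw : Pv w ∈ subdiff f y by
      intro v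
      by_cases hvt : f v = ⊤
      · rw [hvt]; exact le_top
      have : (inner ℝ (Pv w) (v - y) : ℝ) = inner ℝ w (v - y) := hP2 _ _ (hdom v hvt)
      rw [← this]
      exact hPw v
    set S : ℕ → ℝ := fun k => 1 + ∑ i, ‖u' k i‖ with hSdef
    have hS1 : ∀ k, 1 ≤ S k := by
      intro k
      have : (0:ℝ) ≤ ∑ i, ‖u' k i‖ :=
        Finset.sum_nonneg fun i _ => norm_nonneg _
      simp only [hSdef]; linarith
    have hSpos : ∀ k, 0 < S k := fun k => lt_of_lt_of_le one_pos (hS1 k)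
    have hnormle : ∀ k i, ‖u' k i‖ ≤ S k := by
      intro k i
      have h1 : ‖u' k i‖ ≤ ∑ j, ‖u' k j‖ :=
        Finset.single_le_sum (f := fun j => ‖u' k j‖)
          (fun j _ => norm_nonneg _) (Finset.mem_univ i)
      simp only [hSdef]; linarith
    by_cases hB : ∃ B, ∃ᶠ k in atTop, S k ≤ B
    · -- bounded case
      obtain ⟨B, hBf⟩ := hB
      obtain ⟨φ, hφmono, hφ⟩ := Filter.extraction_of_frequently_atTop hBf
      have hK : IsCompact (Set.univ.pi fun _ : Fin N => Metric.closedBall (0 : Evec m) B) :=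
        isCompact_univ_pi fun _ => isCompact_closedBall _ _
      have hTmem : ∀ j, (fun i => u' (φ j) i) ∈
          (Set.univ.pi fun _ : Fin N => Metric.closedBall (0 : Evec m) B) := by
        intro j
        intro i _
        rw [Metric.mem_closedBall, dist_zero_right]
        exact le_trans (hnormle (φ j) i) (hφ j)
      obtain ⟨ub, _, ψ, hψ, hTl⟩ := hK.tendsto_subseq hTmem
      have htco : ∀ i, Tendsto (fun j => u' (φ (ψ j)) i) atTop (𝓝 (ub i)) := by
        intro i
        have := hTl
        rw [tendsto_pi_nhds] at this
        exact this i
      have hub : ∀ i, ub i ∈ subdiff f y := by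
        intro i
        refine subdiff_closed_graph hlsc ℓ hℓ hT
          (z := fun j => z (φ (ψ j)) i) (u := fun j => u' (φ (ψ j)) i)
          ((hz i).comp ((hφmono.comp hψ).tendsto_atTop)) (fun j => hu' _ i) (htco i)
      have hlim2 : Tendsto (fun j => (1 / (N:ℝ)) • ∑ i, u' (φ (ψ j)) i) atTop
          (𝓝 ((1 / (N:ℝ)) • ∑ i, ub i)) := by
        refine Tendsto.const_smul ?_ _
        exact tendsto_finset_sum _ fun i _ => htco i
      have hlim1 : Tendsto (fun j => (1 / (N:ℝ)) • ∑ i, u' (φ (ψ j)) i) atTop (𝓝 (Pv w)) :=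
        havg'.comp ((hφmono.comp hψ).tendsto_atTop)
      have := tendsto_nhds_unique hlim1 hlim2
      rw [this]
      exact subdiff_combo hN _ hub
    · -- unbounded case
      push_neg at hB
      have hSinf : Tendsto S atTop atTop := by
        rw [tendsto_atTop]
        intro B
        have := hB B
        exact this.mono fun k hk => le_of_lt hk
      set nn : ℕ → Fin N → Evec m := fun k i => (S k)⁻¹ • u' k i with hnn
      have hnormn : ∀ k i, ‖nn k i‖ ≤ 1 := by
        intro k i
        rw [hnn]
        simp only [norm_smul, Real.norm_eq_abs, abs_inv, abs_of_pos (hSpos k)]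
        rw [inv_mul_le_iff₀ (hSpos k), mul_one]
        exact hnormle k i
      have hK : IsCompact (Set.univ.pi fun _ : Fin N => Metric.closedBall (0 : Evec m) 1) :=
        isCompact_univ_pi fun _ => isCompact_closedBall _ _
      have hTmem : ∀ k, (fun i => nn k i) ∈
          (Set.univ.pi fun _ : Fin N => Metric.closedBall (0 : Evec m) 1) := by
        intro k i _
        rw [Metric.mem_closedBall, dist_zero_right]
        exact hnormn k i
      obtain ⟨c, _, φ, hφmono, hcl⟩ := hK.tendsto_subseq hTmem
      have hcco : ∀ i, Tendsto (fun j => nn (φ j) i) atTop (𝓝 (c i)) := by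
        intro i
        rw [tendsto_pi_nhds] at hcl
        exact hcl i
      have hSinv : Tendsto (fun j => (S (φ j))⁻¹) atTop (𝓝 0) :=
        (hSinf.comp hφmono.tendsto_atTop).inv_tendsto_atTop
      have hsumnorm : Tendsto (fun j => ∑ i, ‖nn (φ j) i‖) atTop (𝓝 1) := by
        have heq : ∀ k, ∑ i, ‖nn k i‖ = 1 - (S k)⁻¹ := by
          intro k
          have : ∀ i, ‖nn k i‖ = (S k)⁻¹ * ‖u' k i‖ := by
            intro i
            rw [hnn]
            simp [norm_smul, abs_of_pos (hSpos k), abs_inv, Real.norm_eq_abs]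
          rw [Finset.sum_congr rfl fun i _ => this i, ← Finset.mul_sum]
          have hsum : ∑ i, ‖u' k i‖ = S k - 1 := by simp [hSdef]
          rw [hsum]
          rw [inv_mul_eq_div, sub_div, div_self (hSpos k).ne', one_div]
        have : Tendsto (fun j => 1 - (S (φ j))⁻¹) atTop (𝓝 (1 - 0)) :=
          tendsto_const_nhds.sub hSinv
        simpa [← heq] using this
      have hsumc : ∑ i, ‖c i‖ = 1 := by
        have h2 : Tendsto (fun j => ∑ i, ‖nn (φ j) i‖) atTop (𝓝 (∑ i, ‖c i‖)) :=
          tendsto_finset_sum _ fun i _ => (hcco i).norm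
        exact (tendsto_nhds_unique h2 hsumnorm)
      have hex : ∃ i0, c i0 ≠ 0 := by
        by_contra hc0
        push_neg at hc0
        have : ∑ i, ‖c i‖ = 0 := Finset.sum_eq_zero fun i _ => by rw [hc0 i, norm_zero]
        rw [this] at hsumc
        norm_num at hsumc
      obtain ⟨i0, hi0⟩ := hex
      have claim0 : ∀ v, f v ≠ ⊤ → ∀ i, (inner ℝ (c i) (v - y) : ℝ) ≤ 0 := by
        intro v hvt i
        obtain ⟨fv, hfv⟩ := f_real ℓ hℓ hvt
        have hkey : ∀ k, (S k)⁻¹ * (ℓ (z k i)) + (inner ℝ (nn k i) (v - z k i) : ℝ)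
            ≤ (S k)⁻¹ * fv := by
          intro k
          obtain ⟨rk, hrk⟩ := f_real ℓ hℓ (subdiff_ne_top (hu k i) hT)
          have h1 : rk + (inner ℝ (u' k i) (v - z k i) : ℝ) ≤ fv := by
            have := hu' k i v
            rwa [hrk, hfv, ← EReal.coe_add, EReal.coe_le_coe_iff] at this
          have h2 : ℓ (z k i) ≤ rk := by
            have := hℓ (z k i)
            rwa [hrk, EReal.coe_le_coe_iff] at this
          have h3 : ℓ (z k i) + (inner ℝ (u' k i) (v - z k i) : ℝ) ≤ fv := by linarith
          have h4 : (inner ℝ (nn k i) (v - z k i) : ℝ)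
              = (S k)⁻¹ * inner ℝ (u' k i) (v - z k i) := by
            rw [hnn]; exact real_inner_smul_left _ _ _
          rw [h4, ← mul_add]
          exact mul_le_mul_of_nonneg_left h3 (inv_nonneg.2 (hSpos k).le)
        have hl1 : Tendsto (fun j => (S (φ j))⁻¹ * (ℓ (z (φ j) i))
            + (inner ℝ (nn (φ j) i) (v - z (φ j) i) : ℝ)) atTop
            (𝓝 (0 * ℓ y + (inner ℝ (c i) (v - y) : ℝ))) := by
          refine Tendsto.add ?_ ?_
          · exact hSinv.mul ((hℓc.tendsto y).comp ((hz i).comp hφmono.tendsto_atTop))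
          · exact (hcco i).inner (tendsto_const_nhds.sub ((hz i).comp hφmono.tendsto_atTop))
        have hl2 : Tendsto (fun j => (S (φ j))⁻¹ * fv) atTop (𝓝 (0 * fv)) :=
          hSinv.mul_const fv
        have := le_of_tendsto_of_tendsto' hl1 hl2 (fun j => hkey (φ j))
        simpa using this
      have claimsum : ∑ i, c i = 0 := by
        have h1 : Tendsto (fun j => ∑ i, nn (φ j) i) atTop (𝓝 (∑ i, c i)) :=
          tendsto_finset_sum _ fun i _ => hcco i
        have h2 : Tendsto (fun j => ∑ i, nn (φ j) i) atTop (𝓝 (0 : Evec m)) := by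
          have heq : ∀ k, ∑ i, nn k i = ((S k)⁻¹ * (N:ℝ)) • ((1 / (N:ℝ)) • ∑ i, u' k i) := by
            intro k
            rw [hnn]
            rw [← Finset.smul_sum, smul_smul]
            congr 1
            have hN' : ((N:ℝ)) ≠ 0 := by positivity
            field_simp
          have h3 : Tendsto (fun j => ((S (φ j))⁻¹ * (N:ℝ))) atTop (𝓝 0) := by
            simpa using hSinv.mul_const (N:ℝ)
          have h4 : Tendsto (fun j => (1 / (N:ℝ)) • ∑ i, u' (φ j) i) atTop (𝓝 (Pv w)) :=
            havg'.comp hφmono.tendsto_atTop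
          have h5 := h3.smul h4
          rw [zero_smul] at h5
          have hfun : (fun j => ∑ i, nn (φ j) i)
              = fun j => ((S (φ j))⁻¹ * (N:ℝ)) • ((1 / (N:ℝ)) • ∑ i, u' (φ j) i) :=
            funext fun j => heq (φ j)
          rw [hfun]
          exact h5
        exact tendsto_nhds_unique h1 h2
      have claim00 : ∀ v, f v ≠ ⊤ → ∀ i, (inner ℝ (c i) (v - y) : ℝ) = 0 := by
        intro v hvt i
        have hsum0 : ∑ j, (inner ℝ (c j) (v - y) : ℝ) = 0 := by
          rw [← sum_inner, claimsum, inner_zero_left]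
        have := (Finset.sum_eq_zero_iff_of_nonpos
          (fun j _ => claim0 v hvt j)).1 hsum0
        exact this i (Finset.mem_univ i)
      have hcV : ∀ i, c i ∈ V := by
        intro i
        have hcl : IsClosed (V : Set (Evec m)) := Submodule.closed_of_finiteDimensional V
        refine hcl.mem_of_tendsto (hcco i) (Filter.Eventually.of_forall fun j => ?_)
        exact V.smul_mem _ (hP1 _)
      set e := c i0 with he
      set V' : Submodule ℝ (Evec m) := V ⊓ (Submodule.span ℝ {e})ᗮ with hV'
      have heV' : e ∉ V' := by
        intro hmem
        rw [hV', Submodule.mem_inf] at hmem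
        have := Submodule.mem_orthogonal_singleton_iff_inner_right.1 hmem.2
        exact hi0 (inner_self_eq_zero.1 this)
      have hlt : V' < V := lt_of_le_of_ne inf_le_left (by
        intro h
        exact heV' (by rw [h]; exact hcV i0))
      have hrank : Module.finrank ℝ V' ≤ d := by
        have := Submodule.finrank_lt_finrank_of_lt hlt
        omega
      have hdom' : ∀ v, f v ≠ ⊤ → v - y ∈ V' := by
        intro v hvt
        rw [hV', Submodule.mem_inf]
        refine ⟨hdom v hvt, ?_⟩
        rw [Submodule.mem_orthogonal_singleton_iff_inner_right]
        exact claim00 v hvt i0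
      exact ih V' hrank f hlsc ℓ hℓc hℓ hT N hN
        (fun j => z (φ j)) (fun j => u' (φ j)) y (Pv w) hdom'
        (fun i => (hz i).comp hφmono.tendsto_atTop)
        (fun j i => hu' (φ j) i)
        (havg'.comp hφmono.tendsto_atTop)

def epiSet (g : Evec m → EReal) : Set (Evec m × ℝ) := {p | g p.1 ≤ (p.2 : EReal)}

lemma epi_closed {g : Evec m → EReal} (hlsc : LowerSemicontinuous g) :
    IsClosed (epiSet g) := by
  have h1 : IsClosed {p : Evec m × EReal | g p.1 ≤ p.2} := hlsc.isClosed_epigraph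
  have : epiSet g = (fun p : Evec m × ℝ => ((p.1, (p.2 : EReal)) : Evec m × EReal)) ⁻¹'
      {p : Evec m × EReal | g p.1 ≤ p.2} := rfl
  rw [this]
  exact h1.preimage (continuous_fst.prodMk (continuous_coe_real_ereal.comp continuous_snd))

lemma epi_convex {g : Evec m → EReal} (hconv : IsConvexFn g) :
    Convex ℝ (epiSet g) := by
  rintro ⟨p1, p2⟩ hp ⟨q1, q2⟩ hq a b ha hb hab
  simp only [epiSet, Set.mem_setOf_eq] at hp hq ⊢
  calc g (a • p1 + b • q1) ≤ (a : EReal) * g p1 + (b : EReal) * g q1 :=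
        hconv p1 q1 a b ha hb hab
    _ ≤ (a : EReal) * (p2 : EReal) + (b : EReal) * (q2 : EReal) := by
        refine add_le_add ?_ ?_
        · exact mul_le_mul_of_nonneg_left hp (by exact_mod_cast ha)
        · exact mul_le_mul_of_nonneg_left hq (by exact_mod_cast hb)
    _ = ((a * p2 + b * q2 : ℝ) : EReal) := by
        rw [EReal.coe_add, EReal.coe_mul, EReal.coe_mul]
    _ = (((a • p2 + b • q2 : ℝ)) : EReal) := by norm_num

/-- decomposition of a continuous linear functional on `Evec m × ℝ` -/
lemma phi_decomp (φ : (Evec m × ℝ) →L[ℝ] ℝ) (x : Evec m) (t : ℝ) :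
    φ (x, t) = φ (x, 0) + t * φ ((0 : Evec m), 1) := by
  have : ((x, t) : Evec m × ℝ) = (x, (0:ℝ)) + t • ((0 : Evec m), (1:ℝ)) := by
    simp [Prod.ext_iff]
  rw [this, map_add, map_smul]
  simp [smul_eq_mul]

lemma exists_affine_minorant {g : Evec m → EReal} (hbot : ∀ x, g x ≠ ⊥)
    (hlsc : LowerSemicontinuous g) (hconv : IsConvexFn g)
    {x0 : Evec m} (hx0 : g x0 ≠ ⊤) :
    ∃ (a : Evec m) (c : ℝ), ∀ x, ((inner ℝ a x - c : ℝ) : EReal) ≤ g x := by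
  obtain ⟨r0, hr0⟩ : ∃ r0 : ℝ, g x0 = (r0 : EReal) :=
    ⟨(g x0).toReal, ((EReal.coe_toReal hx0 (hbot x0))).symm⟩
  have hnot : ((x0, r0 - 1) : Evec m × ℝ) ∉ epiSet g := by
    simp only [epiSet, Set.mem_setOf_eq, hr0, EReal.coe_le_coe_iff, not_le]
    linarith
  obtain ⟨φ, u, hlt, hgt⟩ :=
    geometric_hahn_banach_point_closed (epi_convex hconv) (epi_closed hlsc) hnot
  set α := φ ((0 : Evec m), 1) with hα
  have hmem0 : ((x0, r0) : Evec m × ℝ) ∈ epiSet g := by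
    simp [epiSet, hr0]
  have hα0 : α ≠ 0 := by
    intro h
    have h1 : φ (x0, r0 - 1) = φ (x0, 0) := by rw [phi_decomp, ← hα, h]; ring
    have h2 : φ (x0, r0) = φ (x0, 0) := by rw [phi_decomp, ← hα, h]; ring
    have := hgt _ hmem0
    rw [h2] at this
    rw [h1] at hlt
    linarith
  have hαpos : 0 < α := by
    rcases lt_or_gt_of_ne hα0 with hneg | hpos
    · exfalso
      set t := max r0 ((u - φ (x0, 0) - 1)/α) with ht
      have hmem : ((x0, t) : Evec m × ℝ) ∈ epiSet g := by
        simp only [epiSet, Set.mem_setOf_eq, hr0]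
        exact_mod_cast le_max_left _ _
      have h2 := hgt _ hmem
      rw [phi_decomp, ← hα] at h2
      have h3 : t * α ≤ u - φ (x0, 0) - 1 := by
        have h4 : (u - φ (x0, 0) - 1)/α ≤ t := le_max_right _ _
        calc t * α ≤ ((u - φ (x0, 0) - 1)/α) * α :=
              (mul_le_mul_right_of_neg hneg).2 h4
          _ = u - φ (x0, 0) - 1 := by field_simp
      linarith
    · exact hpos
  set A : Evec m →L[ℝ] ℝ := φ.comp (ContinuousLinearMap.inl ℝ (Evec m) ℝ) with hA
  have hAx : ∀ x, A x = φ (x, 0) := fun x => rfl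
  set aφ := (InnerProductSpace.toDual ℝ (Evec m)).symm A with haφ
  have haφx : ∀ x : Evec m, (inner ℝ aφ x : ℝ) = A x := fun x =>
    InnerProductSpace.toDual_symm_apply
  refine ⟨(-α⁻¹) • aφ, -(u/α), fun x => ?_⟩
  by_cases hxt : g x = ⊤
  · rw [hxt]; exact le_top
  obtain ⟨ρ, hρ⟩ : ∃ ρ : ℝ, g x = (ρ : EReal) :=
    ⟨(g x).toReal, ((EReal.coe_toReal hxt (hbot x))).symm⟩
  have hmem : ((x, ρ) : Evec m × ℝ) ∈ epiSet g := by simp [epiSet, hρ]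
  have h2 := hgt _ hmem
  rw [phi_decomp, ← hα, ← hAx] at h2
  rw [hρ, EReal.coe_le_coe_iff]
  have h3 : (u - A x)/α < ρ := by
    rw [div_lt_iff₀ hαpos]
    nlinarith
  have h4 : (inner ℝ ((-α⁻¹) • aφ) x : ℝ) = -α⁻¹ * A x := by
    rw [real_inner_smul_left, haφx]
  rw [h4]
  have : -α⁻¹ * A x - -(u/α) = (u - A x)/α := by field_simp; ring
  linarith [this, h3]

set_option maxHeartbeats 1000000 in
lemma exists_point_minorant {g : Evec m → EReal} (hbot : ∀ x, g x ≠ ⊥)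
    (hlsc : LowerSemicontinuous g) (hconv : IsConvexFn g)
    {x0 : Evec m} (hx0 : g x0 ≠ ⊤) (xb : Evec m) (r : ℝ) (hr : (r : EReal) < g xb) :
    ∃ (a : Evec m) (c : ℝ), (∀ x, ((inner ℝ a x - c : ℝ) : EReal) ≤ g x) ∧
      r < (inner ℝ a xb : ℝ) - c := by
  have hnot : ((xb, r) : Evec m × ℝ) ∉ epiSet g := by
    simp only [epiSet, Set.mem_setOf_eq, not_le]
    exact hr
  obtain ⟨φ, u, hlt, hgt⟩ :=
    geometric_hahn_banach_point_closed (epi_convex hconv) (epi_closed hlsc) hnot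
  set α := φ ((0 : Evec m), 1) with hα
  obtain ⟨r0, hr0⟩ : ∃ r0 : ℝ, g x0 = (r0 : EReal) :=
    ⟨(g x0).toReal, ((EReal.coe_toReal hx0 (hbot x0))).symm⟩
  have hαnonneg : 0 ≤ α := by
    by_contra hneg
    push_neg at hneg
    set t := max r0 ((u - φ (x0, 0) - 1)/α) with ht
    have hmem : ((x0, t) : Evec m × ℝ) ∈ epiSet g := by
      simp only [epiSet, Set.mem_setOf_eq, hr0]
      exact_mod_cast le_max_left _ _
    have h2 := hgt _ hmem
    rw [phi_decomp, ← hα] at h2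
    have h3 : t * α ≤ u - φ (x0, 0) - 1 := by
      have h4 : (u - φ (x0, 0) - 1)/α ≤ t := le_max_right _ _
      calc t * α ≤ ((u - φ (x0, 0) - 1)/α) * α :=
            (mul_le_mul_right_of_neg hneg).2 h4
        _ = u - φ (x0, 0) - 1 := div_mul_cancel₀ _ (ne_of_lt hneg)
    linarith
  set A : Evec m →L[ℝ] ℝ := φ.comp (ContinuousLinearMap.inl ℝ (Evec m) ℝ) with hA
  have hAx : ∀ x, A x = φ (x, 0) := fun x => rfl
  set aφ := (InnerProductSpace.toDual ℝ (Evec m)).symm A with haφ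
  have haφx : ∀ x : Evec m, (inner ℝ aφ x : ℝ) = A x := fun x =>
    InnerProductSpace.toDual_symm_apply
  rcases eq_or_lt_of_le hαnonneg with hzero | hαpos
  · -- vertical separation: combine with a basic affine minorant
    obtain ⟨a0, c0, hmin0⟩ := exists_affine_minorant hbot hlsc hconv hx0
    have hepiA : ∀ x, g x ≠ ⊤ → u < A x := by
      intro x hxt
      obtain ⟨ρ, hρ⟩ : ∃ ρ : ℝ, g x = (ρ : EReal) :=
        ⟨(g x).toReal, ((EReal.coe_toReal hxt (hbot x))).symm⟩
      have := hgt (x, ρ) (by simp [epiSet, hρ])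
      rw [phi_decomp, ← hα, ← hzero, ← hAx] at this
      linarith
    have hAxb : A xb < u := by
      have := hlt
      rw [phi_decomp, ← hα, ← hzero, ← hAx] at this
      linarith
    set base : ℝ := (inner ℝ a0 xb : ℝ) - c0 with hbase
    set cc : ℝ := max 0 ((r + 1 - base)/(u - A xb)) with hcc
    have hccnn : 0 ≤ cc := le_max_left _ _
    refine ⟨a0 - cc • aφ, c0 - cc * u, ?_, ?_⟩
    · intro x
      by_cases hxt : g x = ⊤
      · rw [hxt]; exact le_top
      obtain ⟨ρ, hρ⟩ : ∃ ρ : ℝ, g x = (ρ : EReal) :=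
        ⟨(g x).toReal, ((EReal.coe_toReal hxt (hbot x))).symm⟩
      rw [hρ, EReal.coe_le_coe_iff]
      have h5 : (inner ℝ (a0 - cc • aφ) x : ℝ)
          = (inner ℝ a0 x : ℝ) - cc * A x := by
        rw [inner_sub_left, real_inner_smul_left, haφx]
      rw [h5]
      have h6 : (inner ℝ a0 x : ℝ) - c0 ≤ ρ := by
        have := hmin0 x
        rwa [hρ, EReal.coe_le_coe_iff] at this
      have h7 : u < A x := hepiA x hxt
      nlinarith
    · have h5 : (inner ℝ (a0 - cc • aφ) xb : ℝ)
          = (inner ℝ a0 xb : ℝ) - cc * A xb := by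
        rw [inner_sub_left, real_inner_smul_left, haφx]
      rw [h5]
      have h8 : 0 < u - A xb := by linarith
      have h9 : (r + 1 - base)/(u - A xb) ≤ cc := le_max_right _ _
      have h10 : r + 1 - base ≤ cc * (u - A xb) := by
        rw [div_le_iff₀ h8] at h9
        linarith
      nlinarith
  · -- non-vertical: direct minorant
    refine ⟨(-α⁻¹) • aφ, -(u/α), fun x => ?_, ?_⟩
    · by_cases hxt : g x = ⊤
      · rw [hxt]; exact le_top
      obtain ⟨ρ, hρ⟩ : ∃ ρ : ℝ, g x = (ρ : EReal) :=
        ⟨(g x).toReal, ((EReal.coe_toReal hxt (hbot x))).symm⟩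
      have h2 := hgt (x, ρ) (by simp [epiSet, hρ])
      rw [phi_decomp, ← hα, ← hAx] at h2
      rw [hρ, EReal.coe_le_coe_iff]
      have h3 : (u - A x)/α < ρ := by
        rw [div_lt_iff₀ hαpos]
        nlinarith
      have h4 : (inner ℝ ((-α⁻¹) • aφ) x : ℝ) = -α⁻¹ * A x := by
        rw [real_inner_smul_left, haφx]
      rw [h4]
      have : -α⁻¹ * A x - -(u/α) = (u - A x)/α := by field_simp; ring
      linarith [this, h3]
    · have h2 := hlt
      rw [phi_decomp, ← hα, ← hAx] at h2
      have h4 : (inner ℝ ((-α⁻¹) • aφ) xb : ℝ) = -α⁻¹ * A xb := by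
        rw [real_inner_smul_left, haφx]
      rw [h4]
      have h5 : r < (u - A xb)/α := by
        rw [lt_div_iff₀ hαpos]
        nlinarith
      have : -α⁻¹ * A xb - -(u/α) = (u - A xb)/α := by field_simp; ring
      linarith [this, h5]

lemma conj_ge (g : Evec m → EReal) (v x : Evec m) :
    ((inner ℝ v x : ℝ) : EReal) - g x ≤ conjFn g v :=
  le_iSup (fun x => ((inner ℝ v x : ℝ) : EReal) - g x) x

lemma conj_le_of_minorant {g : Evec m → EReal} {a : Evec m} {c : ℝ}
    (hmin : ∀ x, ((inner ℝ a x - c : ℝ) : EReal) ≤ g x) : conjFn g a ≤ (c : EReal) := by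
  refine iSup_le fun x => ?_
  calc ((inner ℝ a x : ℝ) : EReal) - g x
      ≤ ((inner ℝ a x : ℝ) : EReal) - ((inner ℝ a x - c : ℝ) : EReal) :=
        EReal.sub_le_sub (le_refl _) (hmin x)
    _ = (c : EReal) := by
        rw [← EReal.coe_sub]
        norm_cast
        ring

lemma conj_lsc {g : Evec m → EReal} (hbot : ∀ x, g x ≠ ⊥) :
    LowerSemicontinuous (conjFn g) := by
  intro v b hb
  obtain ⟨x, hx⟩ := lt_iSup_iff.1 hb
  have hgx : g x ≠ ⊤ := by
    intro h
    rw [h, EReal.sub_top] at hx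
    exact absurd hx (not_lt_bot)
  obtain ⟨ρ, hρ⟩ : ∃ ρ : ℝ, g x = (ρ : EReal) :=
    ⟨(g x).toReal, ((EReal.coe_toReal hgx (hbot x))).symm⟩
  rw [hρ, ← EReal.coe_sub] at hx
  have hcont : Tendsto (fun v' : Evec m => (inner ℝ v' x : ℝ) - ρ) (𝓝 v)
      (𝓝 ((inner ℝ v x : ℝ) - ρ)) :=
    ((continuous_id.inner continuous_const).sub continuous_const).tendsto v
  induction b with
  | bot =>
    refine Filter.Eventually.of_forall fun v' => ?_
    have h1 : ((inner ℝ v' x - ρ : ℝ) : EReal) ≤ conjFn g v' := by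
      rw [EReal.coe_sub, ← hρ]; exact conj_ge g v' x
    exact lt_of_lt_of_le (EReal.bot_lt_coe _) h1
  | coe br =>
    rw [EReal.coe_lt_coe_iff] at hx
    refine (hcont.eventually (eventually_gt_nhds hx)).mono fun v' hv' => ?_
    refine lt_of_lt_of_le (EReal.coe_lt_coe_iff.2 hv') ?_
    rw [EReal.coe_sub, ← hρ]
    exact conj_ge g v' x
  | top => exact absurd hx not_top_lt


end AuxLemmas

/-- the limiting argument establishing `y* ∈ ∂g(w*)` from the
per-iteration inclusion in averaged subdifferentials of `g*`. -/
theorem limiting_subgradient {N m : ℕ} (hN : 0 < N) (σ : ℝ) (hσ : 0 < σ)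
    (g : Evec m → EReal) (hg : InGamma g)
    (y z s : ℕ → Fin N → Evec m) (ystar wstar : Evec m)
    (hy : ∀ i, Filter.Tendsto (fun k => y k i) Filter.atTop (nhds ystar))
    (hz : ∀ i, Filter.Tendsto (fun k => z k i) Filter.atTop (nhds ystar))
    (hs : ∀ k i, s (k + 1) i = s k i + σ • (y k i - z k i))
    (w : ℕ → Evec m) (hw : ∀ k, w k = ∑ i, s k i)
    (hwlim : Filter.Tendsto w Filter.atTop (nhds wstar))
    (hincl : ∀ k, ∃ u : Fin N → Evec m,
      (∀ i, u i ∈ subdiff (conjFn g) (z (k + 1) i)) ∧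
      w (k + 1) - (σ / N) • ∑ i, (z (k + 1) i - y (k + 1) i)
        = (1 / (N : ℝ)) • ∑ i, u i) :
    ystar ∈ subdiff g wstar := by
  obtain ⟨⟨hbot, x0, hx0⟩, hlsc, hconv⟩ := hg
  have hconj_ge : ∀ v x : Evec m, ((inner ℝ v x : ℝ) : EReal) - g x ≤ conjFn g v :=
    fun v x => conj_ge g v x
  obtain ⟨r0, hr0⟩ : ∃ r0 : ℝ, g x0 = (r0 : EReal) :=
    ⟨(g x0).toReal, ((EReal.coe_toReal hx0 (hbot x0))).symm⟩
  set ℓ : Evec m → ℝ := fun v => (inner ℝ v x0 : ℝ) - r0 with hℓdef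
  have hℓc : Continuous ℓ := (continuous_id.inner continuous_const).sub continuous_const
  have hℓle : ∀ v, (ℓ v : EReal) ≤ conjFn g v := by
    intro v
    have h1 := hconj_ge v x0
    rw [hr0] at h1
    rw [hℓdef]
    simpa [EReal.coe_sub] using h1
  have hFbot : ∀ v, conjFn g v ≠ ⊥ := by
    intro v h
    have := hℓle v
    rw [h, le_bot_iff] at this
    exact EReal.coe_ne_bot _ this
  obtain ⟨a0, c0, hmin0⟩ := exists_affine_minorant hbot hlsc hconv hx0
  have hFa0 : conjFn g a0 ≤ (c0 : EReal) := conj_le_of_minorant hmin0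
  have hFT : ∃ v, conjFn g v ≠ ⊤ := by
    refine ⟨a0, fun h => ?_⟩
    rw [h, top_le_iff] at hFa0
    exact EReal.coe_ne_top _ hFa0
  set U : ℕ → Fin N → Evec m := fun k => (hincl k).choose with hUdef
  have hU := fun k => (hincl k).choose_spec
  have hUsub : ∀ k i, U k i ∈ subdiff (conjFn g) (z (k + 1) i) := fun k i => (hU k).1 i
  have hsucc : Tendsto (fun k : ℕ => k + 1) atTop atTop := tendsto_add_atTop_nat 1
  have havg : Tendsto (fun k => (1 / (N : ℝ)) • ∑ i, U k i) atTop (𝓝 wstar) := by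
    have heq : (fun k => (1 / (N : ℝ)) • ∑ i, U k i)
        = fun k => w (k + 1) - (σ / N) • ∑ i, (z (k + 1) i - y (k + 1) i) :=
      funext fun k => ((hU k).2).symm
    rw [heq]
    have h1 : Tendsto (fun k => w (k + 1)) atTop (𝓝 wstar) := hwlim.comp hsucc
    have h2 : Tendsto (fun k => ∑ i, (z (k + 1) i - y (k + 1) i)) atTop (𝓝 0) := by
      have h3 : ∀ i : Fin N, Tendsto (fun k => z (k + 1) i - y (k + 1) i) atTop
          (𝓝 (ystar - ystar)) := fun i =>
        (((hz i).comp hsucc)).sub (((hy i).comp hsucc))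
      have h4 := tendsto_finset_sum Finset.univ (fun i (_ : i ∈ Finset.univ) => h3 i)
      simpa using h4
    have h3 : Tendsto (fun k => (σ / (N:ℝ)) • ∑ i, (z (k + 1) i - y (k + 1) i)) atTop
        (𝓝 (0 : Evec m)) := by
      have := h2.const_smul (σ / (N:ℝ))
      simpa using this
    have h5 := h1.sub h3
    simpa using h5
  have hws : wstar ∈ subdiff (conjFn g) ystar := by
    refine key_lemma m ⊤ ?_ (conjFn g) (conj_lsc hbot) ℓ hℓc hℓle hFT N hN
      (fun k i => z (k + 1) i) U ystar wstar (fun v _ => Submodule.mem_top)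
      (fun i => (hz i).comp hsucc) hUsub havg
    rw [finrank_top]
    simp [finrank_euclideanSpace]
  have hFyT : conjFn g ystar ≠ ⊤ := subdiff_ne_top hws hFT
  obtain ⟨ρ, hρ⟩ : ∃ ρ : ℝ, conjFn g ystar = (ρ : EReal) :=
    ⟨(conjFn g ystar).toReal, ((EReal.coe_toReal hFyT (hFbot ystar))).symm⟩
  have claimA : g wstar ≤ (((inner ℝ ystar wstar : ℝ) - ρ : ℝ) : EReal) := by
    by_contra hcon
    push_neg at hcon
    obtain ⟨a, c, hmin, hlt2⟩ := exists_point_minorant hbot hlsc hconv hx0 wstar _ hcon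
    have hFa : conjFn g a ≤ (c : EReal) := conj_le_of_minorant hmin
    have h6 := hws a
    rw [hρ, ← EReal.coe_add] at h6
    have h7 : ((ρ + (inner ℝ wstar (a - ystar) : ℝ) : ℝ) : EReal) ≤ (c : EReal) :=
      le_trans h6 hFa
    rw [EReal.coe_le_coe_iff, inner_sub_right] at h7
    have hc1 : (inner ℝ wstar a : ℝ) = inner ℝ a wstar := real_inner_comm _ _
    have hc2 : (inner ℝ wstar ystar : ℝ) = inner ℝ ystar wstar := real_inner_comm _ _
    linarith
  intro x
  by_cases hxt : g x = ⊤
  · rw [hxt]; exact le_top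
  obtain ⟨ρx, hρx⟩ : ∃ ρx : ℝ, g x = (ρx : EReal) :=
    ⟨(g x).toReal, ((EReal.coe_toReal hxt (hbot x))).symm⟩
  have h1 := hconj_ge ystar x
  rw [hρx, hρ, ← EReal.coe_sub, EReal.coe_le_coe_iff] at h1
  have hwT : g wstar ≠ ⊤ := by
    intro h
    rw [h, top_le_iff] at claimA
    exact EReal.coe_ne_top _ claimA
  obtain ⟨ρw, hρw⟩ : ∃ ρw : ℝ, g wstar = (ρw : EReal) :=
    ⟨(g wstar).toReal, ((EReal.coe_toReal hwT (hbot wstar))).symm⟩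
  have hρwle : ρw ≤ (inner ℝ ystar wstar : ℝ) - ρ := by
    rw [hρw, EReal.coe_le_coe_iff] at claimA
    exact claimA
  rw [hρw, hρx, ← EReal.coe_add, EReal.coe_le_coe_iff, inner_sub_right]
  linarith
end
end
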